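/- arXiv:1508.05863 — 2 statements merged into one kernel-verified Lean document; each statement's English description precedes it below -/
import Mathlib

section
/- Let L_n : C[0,ν] → C[0,ν] be positive linear operators with L_n(1) = 1, and suppose the sequences ‖L_n(t;·) − x‖ and ‖L_n(t²;·) − x²‖ (sup norms on [0,ν]) are statistically convergent to 0. Then for every f ∈ C[0,ν], ‖L_n(f;·) − f‖ is statistically convergent to 0. -/
open Classical in
/-- `S ⊆ ℕ` has natural density zero. -/
noncomputable def densityZero (S : Set ℕ) : Prop :=
  Filter.Tendsto (fun n => (((Finset.range n).filter (fun j => j ∈ S)).card : ℝ) / n)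
    Filter.atTop (nhds 0)

/-- Statistical convergence of a real sequence to `L`. -/
noncomputable def statTendsto (x : ℕ → ℝ) (L : ℝ) : Prop :=
  ∀ ε > (0 : ℝ), densityZero {n | ε ≤ |x n - L|}

open Classical in
lemma densityZero_subset {S T : Set ℕ} (h : S ⊆ T) (hT : densityZero T) : densityZero S := by
  unfold densityZero at *
  apply squeeze_zero (fun n => by positivity) (fun n => ?_) hT
  gcongr

open Classical in
lemma densityZero_union {S T : Set ℕ} (hS : densityZero S) (hT : densityZero T) :
    densityZero (S ∪ T) := by
  unfold densityZero at *
  have hsum := hS.add hT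
  rw [add_zero] at hsum
  apply squeeze_zero (fun n => by positivity) (fun n => ?_) hsum
  rw [← add_div]
  gcongr
  have hc : (@Finset.filter ℕ (fun j => j ∈ S ∪ T)
        (fun a => Classical.propDecidable _) (Finset.range n)).card
      ≤ ((Finset.range n).filter (fun j => j ∈ S)).card
        + ((Finset.range n).filter (fun j => j ∈ T)).card := by
    refine le_trans (Finset.card_le_card ?_) (Finset.card_union_le _ _)
    intro j hj
    simp only [Finset.mem_filter, Finset.mem_union, Set.mem_union] at *
    tauto
  exact_mod_cast hc

lemma korovkin_arith {c ν x A B a b e : ℝ} (hc : 0 < c) (hx0 : 0 ≤ x) (hxν : x ≤ ν)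
    (hA : |A - x| ≤ a) (hB : |B - x^2| ≤ b) :
    (e + c*x^2) - 2*c*x*A + c*B ≤ e + c*(2*ν+1)*(a+b) := by
  have hA' := abs_le.mp hA
  have hB' := abs_le.mp hB
  have ha0 : 0 ≤ a := le_trans (abs_nonneg _) hA
  have hb0 : 0 ≤ b := le_trans (abs_nonneg _) hB
  have hν0 : 0 ≤ ν := le_trans hx0 hxν
  have t1 : c*(B - x^2) ≤ c*b := mul_le_mul_of_nonneg_left hB'.2 hc.le
  have t2 : (2*c*x)*(-(A - x)) ≤ (2*c*x)*a := by
    apply mul_le_mul_of_nonneg_left (by linarith [hA'.1]) (by positivity)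
  have t3 : 2*c*x*a ≤ 2*c*ν*a := by
    apply mul_le_mul_of_nonneg_right ?_ ha0
    nlinarith
  nlinarith [t1, t2, t3, mul_nonneg (mul_nonneg hc.le hν0) hb0,
    mul_nonneg hc.le ha0, mul_nonneg hc.le hb0,
    mul_nonneg (mul_nonneg hc.le hν0) ha0]

theorem statistical_korovkin (ν : ℝ) (hν : 0 < ν)
    (L : ℕ → C(Set.Icc (0 : ℝ) ν, ℝ) →ₗ[ℝ] C(Set.Icc (0 : ℝ) ν, ℝ))
    (hpos : ∀ n (f : C(Set.Icc (0 : ℝ) ν, ℝ)), (∀ x, 0 ≤ f x) → ∀ x, 0 ≤ L n f x)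
    (h0 : ∀ n, L n (ContinuousMap.const _ 1) = ContinuousMap.const _ 1)
    (h1 : statTendsto (fun n =>
      ‖L n ⟨fun x => (x : ℝ), continuous_subtype_val⟩ -
        ⟨fun x => (x : ℝ), continuous_subtype_val⟩‖) 0)
    (h2 : statTendsto (fun n =>
      ‖L n ⟨fun x => (x : ℝ) ^ 2, by fun_prop⟩ - ⟨fun x => (x : ℝ) ^ 2, by fun_prop⟩‖) 0) :
    ∀ f : C(Set.Icc (0 : ℝ) ν, ℝ), statTendsto (fun n => ‖L n f - f‖) 0 := by
  intro f ε hε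
  set e1 : C(Set.Icc (0:ℝ) ν, ℝ) := ⟨fun x => (x : ℝ), continuous_subtype_val⟩ with he1
  set e2 : C(Set.Icc (0:ℝ) ν, ℝ) := ⟨fun x => (x : ℝ)^2, by fun_prop⟩ with he2
  -- monotonicity of the operators
  have hmono : ∀ n (g h : C(Set.Icc (0:ℝ) ν, ℝ)), (∀ x, g x ≤ h x) → ∀ x, L n g x ≤ L n h x := by
    intro n g h hgh x
    have hp := hpos n (h - g) (fun y => by simpa using sub_nonneg.2 (hgh y)) x
    rw [map_sub] at hp
    simpa using sub_nonneg.1 (by simpa using hp)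
  -- pointwise estimate via uniform continuity, packaged
  obtain ⟨c, hc0, hpt⟩ : ∃ c : ℝ, 0 < c ∧
      ∀ t x : Set.Icc (0:ℝ) ν, |f t - f x| ≤ ε/2 + c * ((t:ℝ) - (x:ℝ))^2 := by
    have hM : (0:ℝ) < ‖f‖ + 1 := by positivity
    obtain ⟨δ, hδ, hδ'⟩ := Metric.uniformContinuous_iff.mp
      (CompactSpace.uniformContinuous_of_continuous f.continuous) (ε/2) (by positivity)
    refine ⟨2 * (‖f‖ + 1) / δ^2, by positivity, fun t x => ?_⟩
    set c := 2 * (‖f‖ + 1) / δ^2 with hcdef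
    have hc0 : (0:ℝ) < c := by positivity
    rcases lt_or_ge (dist t x) δ with h | h
    · have hlt := hδ' h
      rw [Real.dist_eq] at hlt
      nlinarith [sq_nonneg ((t:ℝ) - (x:ℝ)),
        mul_nonneg hc0.le (sq_nonneg ((t:ℝ) - (x:ℝ)))]
    · have hdist : dist t x = |(t:ℝ) - (x:ℝ)| := by
        rw [Subtype.dist_eq, Real.dist_eq]
      have h3 : δ ≤ |(t:ℝ) - (x:ℝ)| := hdist ▸ h
      have h2 : δ^2 ≤ ((t:ℝ) - (x:ℝ))^2 := by
        calc δ^2 ≤ |(t:ℝ) - (x:ℝ)|^2 := pow_le_pow_left₀ hδ.le h3 2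
          _ = _ := sq_abs _
      have hft : |f t| ≤ ‖f‖ := by simpa using (f.norm_coe_le_norm t)
      have hfx : |f x| ≤ ‖f‖ := by simpa using (f.norm_coe_le_norm x)
      have habs : |f t - f x| ≤ 2 * (‖f‖ + 1) := by
        calc |f t - f x| ≤ |f t| + |f x| := abs_sub _ _
          _ ≤ 2 * (‖f‖ + 1) := by linarith
      have hcδ : c * δ^2 = 2 * (‖f‖ + 1) := by rw [hcdef]; field_simp
      nlinarith [mul_le_mul_of_nonneg_left h2 hc0.le]
  set C := c * (2*ν + 1) with hCdef
  have hC0 : (0:ℝ) < C := by positivity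
  -- the Korovkin estimate
  have key : ∀ n, ‖L n f - f‖ ≤ ε/2 + C * (‖L n e1 - e1‖ + ‖L n e2 - e2‖) := by
    intro n
    have hrhs : (0:ℝ) ≤ ε/2 + C * (‖L n e1 - e1‖ + ‖L n e2 - e2‖) := by positivity
    rw [ContinuousMap.norm_le _ hrhs]
    intro x
    set one : C(Set.Icc (0:ℝ) ν, ℝ) := ContinuousMap.const _ 1 with hone
    set g : C(Set.Icc (0:ℝ) ν, ℝ) := f - (f x) • one with hg
    set hh : C(Set.Icc (0:ℝ) ν, ℝ) :=
      (ε/2 + c * (x:ℝ)^2) • one - (2*c*(x:ℝ)) • e1 + c • e2 with hhdef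
    have hhval : ∀ t : Set.Icc (0:ℝ) ν, hh t = ε/2 + c * ((t:ℝ) - (x:ℝ))^2 := by
      intro t
      simp only [hhdef, hone, he1, he2, ContinuousMap.add_apply, ContinuousMap.sub_apply,
        ContinuousMap.smul_apply, ContinuousMap.const_apply, ContinuousMap.coe_mk,
        smul_eq_mul]
      ring
    have hgval : ∀ t : Set.Icc (0:ℝ) ν, g t = f t - f x := by
      intro t
      simp [hg, hone]
    have hle1 : ∀ t, g t ≤ hh t := by
      intro t
      rw [hhval, hgval]
      exact le_trans (le_abs_self _) (hpt t x)
    have hle2 : ∀ t, (-hh) t ≤ g t := by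
      intro t
      rw [ContinuousMap.neg_apply, hhval, hgval]
      have := neg_abs_le (f t - f x)
      linarith [hpt t x]
    have hub : L n g x ≤ L n hh x := hmono n g hh hle1 x
    have hlb : -(L n hh x) ≤ L n g x := by
      have := hmono n (-hh) g hle2 x
      rw [map_neg] at this
      simpa using this
    have habs : |L n g x| ≤ L n hh x := abs_le.mpr ⟨hlb, hub⟩
    have hgx : L n g x = L n f x - f x := by
      rw [hg, map_sub, map_smul, hone, h0 n]
      simp [hone]
    have hhx : L n hh x = (ε/2 + c*(x:ℝ)^2) - 2*c*(x:ℝ) * (L n e1 x) + c * (L n e2 x) := by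
      rw [hhdef, map_add, map_sub, map_smul, map_smul, map_smul, hone, h0 n]
      simp only [hone, ContinuousMap.add_apply, ContinuousMap.sub_apply,
        ContinuousMap.smul_apply, ContinuousMap.const_apply, smul_eq_mul]
      ring
    have he1b : |L n e1 x - (x:ℝ)| ≤ ‖L n e1 - e1‖ := by
      have := ContinuousMap.norm_coe_le_norm (L n e1 - e1) x
      simpa [he1, Real.norm_eq_abs] using this
    have he2b : |L n e2 x - (x:ℝ)^2| ≤ ‖L n e2 - e2‖ := by
      have := ContinuousMap.norm_coe_le_norm (L n e2 - e2) x
      simpa [he2, Real.norm_eq_abs] using this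
    have hfinal : L n hh x ≤ ε/2 + C * (‖L n e1 - e1‖ + ‖L n e2 - e2‖) := by
      rw [hhx, hCdef]
      exact korovkin_arith hc0 x.2.1 x.2.2 he1b he2b
    calc ‖(L n f - f) x‖ = |L n g x| := by
          rw [ContinuousMap.sub_apply, Real.norm_eq_abs, hgx]
      _ ≤ L n hh x := habs
      _ ≤ _ := hfinal
  -- statistical part
  have hd1 := h1 (ε/(4*C)) (by positivity)
  have hd2 := h2 (ε/(4*C)) (by positivity)
  apply densityZero_subset ?_ (densityZero_union hd1 hd2)
  intro n hn
  simp only [Set.mem_setOf_eq, sub_zero, Set.mem_union] at hn ⊢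
  by_contra hcon
  push_neg at hcon
  obtain ⟨hA, hB⟩ := hcon
  have hA' : |‖L n e1 - e1‖| < ε/(4*C) := hA
  have hB' : |‖L n e2 - e2‖| < ε/(4*C) := hB
  rw [abs_of_nonneg (norm_nonneg _)] at hA' hB' hn
  have hkey := key n
  have hCsplit : C * (ε/(4*C)) + C * (ε/(4*C)) = ε/2 := by
    field_simp
    ring
  have hlt : ‖L n f - f‖ < ε := by
    have h5 : C * (‖L n e1 - e1‖ + ‖L n e2 - e2‖) < C * (ε/(4*C)) + C * (ε/(4*C)) := by
      rw [mul_add]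
      exact add_lt_add (mul_lt_mul_of_pos_left hA' hC0) (mul_lt_mul_of_pos_left hB' hC0)
    linarith
  linarith
end

section
/- Let f belong to the Lipschitz-type maximal function class V_{α,E} on E ⊆ [0,∞), meaning there is M > 0 and 0 < α ≤ 1 such that |f(t) − f(y)| ≤ M·|t − y|^α for all t ≥ 0 and y ∈ E, and let L be a positive linear operator on bounded continuous functions with L(1)(x) = 1. Then for every x ≥ 0, |L(f)(x) − f(x)| ≤ M·((L((t−x)²)(x))^{α/2} + 2·d(x,E)^α), where d(x,E) = inf{|x−y| : y ∈ E}. -/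
private lemma rpow_subadd {a b p : ℝ} (ha : 0 ≤ a) (hb : 0 ≤ b) (hp : 0 ≤ p) (hp1 : p ≤ 1) :
    (a + b) ^ p ≤ a ^ p + b ^ p := by
  have h := NNReal.rpow_add_le_add_rpow a.toNNReal b.toNNReal hp hp1
  have h2 := NNReal.coe_le_coe.2 h
  push_cast at h2
  simpa [Real.coe_toNNReal a ha, Real.coe_toNNReal b hb] using h2

private lemma young_pt {α : ℝ} (hα0 : 0 < α) (hα1 : α ≤ 1) (lam s : ℝ) (hlam : 0 < lam) :
    |s| ^ α ≤ (α/2) * lam ^ (α - 2) * s ^ 2 + (1 - α/2) * lam ^ α := by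
  have hw1 : (0:ℝ) ≤ α/2 := by linarith
  have hw2 : (0:ℝ) ≤ 1 - α/2 := by linarith
  have hp1 : (0:ℝ) ≤ (|s|/lam)^2 := sq_nonneg _
  have hsum : α/2 + (1 - α/2) = 1 := by ring
  have key := Real.geom_mean_le_arith_mean2_weighted hw1 hw2 hp1 zero_le_one hsum
  simp only [Real.one_rpow, mul_one] at key
  have habs : 0 ≤ |s|/lam := div_nonneg (abs_nonneg s) hlam.le
  have e1 : (((|s|/lam)^2)) ^ (α/2) = |s|^α / lam^α := by
    rw [← Real.rpow_natCast (|s|/lam) 2, ← Real.rpow_mul habs]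
    push_cast
    rw [show (2:ℝ) * (α/2) = α by ring, Real.div_rpow (abs_nonneg s) hlam.le]
  rw [e1] at key
  have hlama : 0 < lam ^ α := Real.rpow_pos_of_pos hlam α
  rw [div_le_iff₀ hlama] at key
  have e2 : lam ^ (α - 2) = lam ^ α / lam ^ 2 := by
    rw [Real.rpow_sub hlam, show ((2:ℝ)) = ((2:ℕ):ℝ) by norm_num, Real.rpow_natCast]
  calc |s|^α ≤ (α/2 * (|s|/lam)^2 + (1 - α/2)) * lam^α := key
    _ = (α/2) * (lam^α / lam^2) * s^2 + (1-α/2)*lam^α := by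
        rw [div_pow, sq_abs]; ring
    _ = (α/2) * lam^(α-2) * s^2 + (1-α/2)*lam^α := by rw [e2]

theorem lipschitz_maximal_rate (E : Set ℝ) (hE : E ⊆ Set.Ici 0) (hEne : E.Nonempty)
    (f : ℝ → ℝ) (M α : ℝ) (hM : 0 < M) (hα0 : 0 < α) (hα1 : α ≤ 1)
    (hf : ∀ t ≥ (0 : ℝ), ∀ y ∈ E, |f t - f y| ≤ M * |t - y| ^ α)
    (L : (ℝ → ℝ) →ₗ[ℝ] (ℝ → ℝ))
    (hpos : ∀ g : ℝ → ℝ, (∀ t ≥ (0 : ℝ), 0 ≤ g t) → ∀ y ≥ (0 : ℝ), 0 ≤ L g y)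
    (x : ℝ) (hx : 0 ≤ x) (h1 : L (fun _ => 1) x = 1) :
    |L f x - f x| ≤
      M * ((L (fun t => (t - x) ^ 2) x) ^ (α / 2) + 2 * Metric.infDist x E ^ α) := by
  set d := Metric.infDist x E with hd
  have hd0 : 0 ≤ d := Metric.infDist_nonneg
  set A := L (fun t => (t - x) ^ 2) x with hA
  have hA0 : 0 ≤ A := hpos _ (fun t _ => sq_nonneg _) x hx
  -- monotonicity of L at x
  have mono : ∀ g h : ℝ → ℝ, (∀ t ≥ (0:ℝ), g t ≤ h t) → L g x ≤ L h x := by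
    intro g h hgh
    have h0 := hpos (h - g) (fun t ht => by
      simpa [Pi.sub_apply, sub_nonneg] using hgh t ht) x hx
    rw [map_sub] at h0
    simpa [Pi.sub_apply, sub_nonneg] using h0
  -- |L g x| ≤ L |g| x
  have habs : ∀ g : ℝ → ℝ, |L g x| ≤ L (fun t => |g t|) x := by
    intro g
    rw [abs_le]
    have hneg : L (fun t => -|g t|) x = - L (fun t => |g t|) x := by
      have e : (fun t => -|g t|) = -(fun t => |g t|) := rfl
      rw [e, map_neg]; rfl
    constructor
    · have := mono (fun t => -|g t|) g (fun t _ => neg_abs_le _)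
      rw [hneg] at this; linarith
    · exact mono g (fun t => |g t|) (fun t _ => le_abs_self _)
  -- B := L (|t-x|^α) x and its bound by A^(α/2)
  set B := L (fun t => |t - x| ^ α) x with hB
  have hBlam : ∀ lam : ℝ, 0 < lam → B ≤ (α/2) * lam ^ (α-2) * A + (1 - α/2) * lam ^ α := by
    intro lam hlam
    have step := mono (fun t => |t - x| ^ α)
      (fun t => (α/2) * lam ^ (α-2) * (t - x) ^ 2 + (1 - α/2) * lam ^ α)
      (fun t _ => young_pt hα0 hα1 lam (t - x) hlam)
    have e : (fun t => (α/2) * lam ^ (α-2) * (t - x) ^ 2 + (1 - α/2) * lam ^ α)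
        = ((α/2) * lam ^ (α-2)) • (fun t : ℝ => (t - x) ^ 2)
          + ((1 - α/2) * lam ^ α) • (fun _ : ℝ => (1:ℝ)) := by
      funext t
      simp only [Pi.add_apply, Pi.smul_apply, smul_eq_mul, mul_one]
    rw [e, map_add, map_smul, map_smul] at step
    simpa [h1] using step
  have hBA : B ≤ A ^ (α/2) := by
    rcases eq_or_lt_of_le hA0 with hA0' | hApos
    · -- A = 0
      have hAz : A = 0 := hA0'.symm
      have hB0 : ∀ lam : ℝ, 0 < lam → B ≤ (1 - α/2) * lam ^ α := by
        intro lam hlam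
        have := hBlam lam hlam
        rw [hAz] at this; simpa using this
      have hBle : B ≤ 0 := by
        have htend : Filter.Tendsto (fun lam : ℝ => (1 - α/2) * lam ^ α)
            (nhdsWithin 0 (Set.Ioi 0)) (nhds 0) := by
          have hc : ContinuousAt (fun lam : ℝ => lam ^ α) 0 :=
            Real.continuousAt_rpow_const 0 α (Or.inr hα0.le)
          have : Filter.Tendsto (fun lam : ℝ => lam ^ α) (nhdsWithin 0 (Set.Ioi 0))
              (nhds ((0:ℝ) ^ α)) := (hc.tendsto).mono_left nhdsWithin_le_nhds
          rw [Real.zero_rpow hα0.ne'] at this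
          simpa using this.const_mul (1 - α/2)
        exact ge_of_tendsto htend (by
          filter_upwards [self_mem_nhdsWithin] with lam hlam using hB0 lam hlam)
      rw [hAz, Real.zero_rpow (by positivity : α/2 ≠ 0)]
      exact hBle
    · have hlam : 0 < A ^ ((1:ℝ)/2) := Real.rpow_pos_of_pos hApos _
      have := hBlam _ hlam
      have e1 : (A ^ ((1:ℝ)/2)) ^ (α - 2) = A ^ ((α-2)/2) := by
        rw [← Real.rpow_mul hA0]; ring_nf
      have e2 : (A ^ ((1:ℝ)/2)) ^ α = A ^ (α/2) := by
        rw [← Real.rpow_mul hA0]; ring_nf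
      rw [e1, e2] at this
      have e3 : A ^ ((α-2)/2) * A = A ^ (α/2) := by
        nth_rewrite 2 [← Real.rpow_one A]
        rw [← Real.rpow_add hApos, show (α-2)/2 + 1 = α/2 by ring]
      calc B ≤ α/2 * A ^ ((α-2)/2) * A + (1 - α/2) * A ^ (α/2) := this
        _ = (α/2) * (A ^ ((α-2)/2) * A) + (1 - α/2) * A ^ (α/2) := by ring
        _ = A ^ (α/2) := by rw [e3]; ring
  -- main estimate for each ε > 0
  have key : ∀ ε : ℝ, 0 < ε → |L f x - f x| ≤ M * (A ^ (α/2) + 2 * (d + ε) ^ α) := by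
    intro ε hε
    obtain ⟨x₀, hx₀E, hx₀d⟩ : ∃ y ∈ E, dist x y < d + ε := by
      rw [← Metric.infDist_lt_iff hEne]; linarith
    have hx₀0 : (0:ℝ) ≤ x₀ := hE hx₀E
    have hc : |x - x₀| ≤ d + ε := by
      rw [← Real.dist_eq]; exact hx₀d.le
    have hc0 : 0 ≤ |x - x₀| := abs_nonneg _
    -- pointwise bound for |f t - f x₀|
    have hpt : ∀ t ≥ (0:ℝ), |f t - f x₀| ≤ M * (|t - x| ^ α + |x - x₀| ^ α) := by
      intro t ht
      have h1' := hf t ht x₀ hx₀E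
      have h2' : |t - x₀| ^ α ≤ |t - x| ^ α + |x - x₀| ^ α := by
        have htri : |t - x₀| ≤ |t - x| + |x - x₀| := by
          have := abs_sub_le t x x₀; linarith
        calc |t - x₀| ^ α ≤ (|t - x| + |x - x₀|) ^ α :=
              Real.rpow_le_rpow (abs_nonneg _) htri hα0.le
          _ ≤ |t - x| ^ α + |x - x₀| ^ α :=
              rpow_subadd (abs_nonneg _) (abs_nonneg _) hα0.le hα1
      calc |f t - f x₀| ≤ M * |t - x₀| ^ α := h1'
        _ ≤ M * (|t - x| ^ α + |x - x₀| ^ α) := by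
            exact mul_le_mul_of_nonneg_left h2' hM.le
    -- L f x - f x₀ bound
    have hLf : |L f x - f x₀| ≤ M * B + M * |x - x₀| ^ α := by
      have e : L (fun t => f t - f x₀) x = L f x - f x₀ := by
        have e' : (fun t => f t - f x₀) = f - (f x₀) • (fun _ => (1:ℝ)) := by
          funext t; simp
        rw [e', map_sub, map_smul]
        simp [h1]
      have h3 := habs (fun t => f t - f x₀)
      rw [e] at h3
      have h4 := mono (fun t => |f t - f x₀|)
        (fun t => M * (|t - x| ^ α + |x - x₀| ^ α)) hpt
      have e2 : (fun t => M * (|t - x| ^ α + |x - x₀| ^ α))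
          = M • (fun t : ℝ => |t - x| ^ α) + (M * |x - x₀| ^ α) • (fun _ : ℝ => (1:ℝ)) := by
        funext t
        simp only [Pi.add_apply, Pi.smul_apply, smul_eq_mul, mul_one]
        ring
      rw [e2, map_add, map_smul, map_smul] at h4
      simp only [Pi.add_apply, Pi.smul_apply, smul_eq_mul, h1, mul_one] at h4
      exact h3.trans h4
    have hfx : |f x - f x₀| ≤ M * |x - x₀| ^ α := hf x hx x₀ hx₀E
    have hcα : |x - x₀| ^ α ≤ (d + ε) ^ α := Real.rpow_le_rpow hc0 hc hα0.le
    calc |L f x - f x| ≤ |L f x - f x₀| + |f x₀ - f x| := abs_sub_le _ _ _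
      _ ≤ (M * B + M * |x - x₀| ^ α) + M * |x - x₀| ^ α := by
          rw [abs_sub_comm (f x₀)]; exact add_le_add hLf hfx
      _ ≤ (M * A ^ (α/2) + M * (d+ε) ^ α) + M * (d+ε) ^ α := by
          have := mul_le_mul_of_nonneg_left hBA hM.le
          have := mul_le_mul_of_nonneg_left hcα hM.le
          gcongr
      _ = M * (A ^ (α/2) + 2 * (d + ε) ^ α) := by ring
  -- take ε → 0
  have htend : Filter.Tendsto (fun ε : ℝ => M * (A ^ (α/2) + 2 * (d + ε) ^ α))
      (nhdsWithin 0 (Set.Ioi 0)) (nhds (M * (A ^ (α/2) + 2 * d ^ α))) := by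
    have hc : ContinuousAt (fun y : ℝ => y ^ α) d :=
      Real.continuousAt_rpow_const d α (Or.inr hα0.le)
    have h2 : Filter.Tendsto (fun ε : ℝ => (d + ε) ^ α) (nhds 0) (nhds (d ^ α)) := by
      have hadd : Filter.Tendsto (fun ε : ℝ => d + ε) (nhds 0) (nhds d) := by
        convert (continuous_const.add continuous_id : Continuous (fun ε : ℝ => d + ε)).tendsto (0:ℝ) using 2 <;> simp [hd]
      exact hc.tendsto.comp hadd
    have := ((h2.const_mul 2).const_add (A ^ (α/2))).const_mul M
    exact this.mono_left nhdsWithin_le_nhds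
  exact ge_of_tendsto htend (by
    filter_upwards [self_mem_nhdsWithin] with ε hε using key ε hε)
end
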